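/- Let U be a unitary operator on a Hilbert space H with complementary orthogonal projections P⁺, P⁻ such that the off-diagonal blocks are Hilbert-Schmidt, and suppose U₋₋ := P⁻UP⁻ restricted to ran P⁻ → ran P⁻ is invertible. Then R := (U₋₋)⁻¹ satisfies R*R ∈ id + I₁(ran P⁻), i.e., R*R has a well-defined Fredholm determinant. -/

import Mathlib

noncomputable section

variable {H H' G : Type*}
  [NormedAddCommGroup H] [InnerProductSpace ℂ H] [CompleteSpace H]
  [NormedAddCommGroup H'] [InnerProductSpace ℂ H'] [CompleteSpace H']

open ContinuousLinearMap

/-- A bounded operator is Hilbert–Schmidt if `∑ ‖T eᵢ‖²` is finite for a Hilbert basis. -/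
def IsHilbertSchmidt {H G : Type*} [NormedAddCommGroup H] [InnerProductSpace ℂ H] [CompleteSpace H]
    [NormedAddCommGroup G] [InnerProductSpace ℂ G] (T : H →L[ℂ] G) : Prop :=
  ∃ (w : Set H) (b : HilbertBasis w ℂ H), Summable fun i => ‖T (b i)‖ ^ 2

/-- The Hilbert–Schmidt norm, computed with respect to a chosen Hilbert basis. -/
noncomputable def hsNorm {H G : Type*} [NormedAddCommGroup H] [InnerProductSpace ℂ H] [CompleteSpace H]
    [NormedAddCommGroup G] [InnerProductSpace ℂ G] (T : H →L[ℂ] G) : ℝ :=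
  Real.sqrt (∑' i, ‖T ((exists_hilbertBasis ℂ H).choose_spec.choose i)‖ ^ 2)

/-- The absolute value `|T| = √(T*T)` of a bounded operator, via the CFC. -/
noncomputable def opAbs (T : H →L[ℂ] H) : H →L[ℂ] H :=
  CFC.sqrt (ContinuousLinearMap.adjoint T ∘L T)

/-- Trace class: `∑ ⟪eᵢ, |T| eᵢ⟫` is finite for a Hilbert basis. -/
def IsTraceClass (T : H →L[ℂ] H) : Prop :=
  ∃ (w : Set H) (b : HilbertBasis w ℂ H),
    Summable fun i => RCLike.re (inner (𝕜 := ℂ) (b i) (opAbs T (b i)))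

/-- The trace norm `∑ ⟪eᵢ, |T| eᵢ⟫` computed with respect to a chosen Hilbert basis. -/
noncomputable def traceNorm (T : H →L[ℂ] H) : ℝ :=
  ∑' i, RCLike.re (inner (𝕜 := ℂ)
    ((exists_hilbertBasis ℂ H).choose_spec.choose i)
    (opAbs T ((exists_hilbertBasis ℂ H).choose_spec.choose i)))

/-- Fredholm determinant `det(1 + T)`, defined as the limit of finite-section determinants
along the net of finite subsets of a chosen Hilbert basis. -/
noncomputable def fredholmDet (T : H →L[ℂ] H) : ℂ :=
  letI := Classical.decEq (exists_hilbertBasis ℂ H).choose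
  Filter.limUnder Filter.atTop fun s : Finset (exists_hilbertBasis ℂ H).choose =>
    Matrix.det ((1 : Matrix s s ℂ) + Matrix.of fun i j =>
      inner (𝕜 := ℂ) ((exists_hilbertBasis ℂ H).choose_spec.choose i.1)
        (T ((exists_hilbertBasis ℂ H).choose_spec.choose j.1)))

end


noncomputable section

open ContinuousLinearMap

variable {H H' : Type*}
  [NormedAddCommGroup H] [InnerProductSpace ℂ H] [CompleteSpace H]
  [NormedAddCommGroup H'] [InnerProductSpace ℂ H'] [CompleteSpace H']

set_option maxHeartbeats 1000000
set_option synthInstance.maxHeartbeats 1000000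
set_option linter.unusedSectionVars false
set_option linter.unusedVariables false

lemma parseval_sq' {ι : Type*} (b : HilbertBasis ι ℂ H) (x : H) :
    HasSum (fun i => ‖(inner ℂ (b i) x : ℂ)‖ ^ 2) (‖x‖ ^ 2) := by
  have h := (b.hasSum_inner_mul_inner x x).mapL Complex.reCLM
  have e1 : ∀ i, Complex.reCLM ((inner ℂ x (b i) : ℂ) * inner ℂ (b i) x)
      = ‖(inner ℂ (b i) x : ℂ)‖ ^ 2 := by
    intro i
    rw [← inner_conj_symm (b i) x, RCLike.mul_conj]
    simp [norm_inner_symm x, ← Complex.ofReal_pow]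
  have e2 : Complex.reCLM (inner ℂ x x : ℂ) = ‖x‖ ^ 2 := by
    simpa using inner_self_eq_norm_sq (𝕜 := ℂ) x
  simpa [e1, e2, ← Complex.ofReal_pow, Complex.ofReal_re] using h

lemma summable_adjoint_sq' {ι : Type*} (b : HilbertBasis ι ℂ H) (T : H →L[ℂ] H)
    (hT : Summable fun i => ‖T (b i)‖ ^ 2) :
    Summable fun i => ‖ContinuousLinearMap.adjoint T (b i)‖ ^ 2 := by
  set f : ι × ι → ℝ := fun p => ‖(inner ℂ (b p.2) (T (b p.1)) : ℂ)‖ ^ 2 with hf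
  have hrow : ∀ i, HasSum (fun j => f (i, j)) (‖T (b i)‖ ^ 2) := fun i =>
    parseval_sq' b (T (b i))
  have hfpos : 0 ≤ f := fun p => sq_nonneg _
  have hfsum : Summable f := by
    rw [summable_prod_of_nonneg hfpos]
    exact ⟨fun i => (hrow i).summable, hT.congr fun i => ((hrow i).tsum_eq).symm⟩
  have hswap : Summable (fun p : ι × ι => f p.swap) := hfsum.prod_symm
  have hcol : Summable fun j => ∑' i, f (i, j) :=
    ((summable_prod_of_nonneg (fun p => hfpos p.swap)).mp hswap).2
  have hcol' : ∀ j, HasSum (fun i => f (i, j)) (‖ContinuousLinearMap.adjoint T (b j)‖ ^ 2) := by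
    intro j
    refine (parseval_sq' b (ContinuousLinearMap.adjoint T (b j))).congr_fun fun i => ?_
    simp only [hf]
    rw [← ContinuousLinearMap.adjoint_inner_left]
    simp [norm_inner_symm]
  exact hcol.congr fun j => (hcol' j).tsum_eq

lemma summable_comp_sq' {ι : Type*} (b : HilbertBasis ι ℂ H) (B A : H →L[ℂ] H)
    (hB : Summable fun i => ‖B (b i)‖ ^ 2) :
    Summable fun i => ‖(B ∘L A) (b i)‖ ^ 2 := by
  have h1 := summable_adjoint_sq' b B hB
  have h2 : Summable fun i => ‖ContinuousLinearMap.adjoint (B ∘L A) (b i)‖ ^ 2 := by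
    refine Summable.of_nonneg_of_le (fun i => sq_nonneg _) (fun i => ?_)
      (h1.mul_left (‖ContinuousLinearMap.adjoint A‖ ^ 2))
    rw [ContinuousLinearMap.adjoint_comp]
    calc ‖(ContinuousLinearMap.adjoint A ∘L ContinuousLinearMap.adjoint B) (b i)‖ ^ 2
        ≤ (‖ContinuousLinearMap.adjoint A‖ * ‖ContinuousLinearMap.adjoint B (b i)‖) ^ 2 := by
          apply pow_le_pow_left₀ (norm_nonneg _)
          rw [ContinuousLinearMap.comp_apply]
          exact (ContinuousLinearMap.adjoint A).le_opNorm _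
      _ = ‖ContinuousLinearMap.adjoint A‖ ^ 2 * ‖ContinuousLinearMap.adjoint B (b i)‖ ^ 2 := by
          ring
  simpa [ContinuousLinearMap.adjoint_adjoint] using summable_adjoint_sq' b _ h2

/-- `R` is the inverse of `U₋₋` relative to `ran P⁻`; the identity on `ran P⁻`,
extended by `0`, is `P⁻` itself, so `R*R ∈ id + I₁(ran P⁻)` reads `R*R - P⁻ ∈ I₁`. -/
theorem stmt12 (U Pp Pm : H →L[ℂ] H)
    (hU1 : adjoint U ∘L U = 1) (hU2 : U ∘L adjoint U = 1)
    (hPpSa : IsSelfAdjoint Pp) (hPmSa : IsSelfAdjoint Pm)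
    (hPpIdem : IsIdempotentElem Pp) (hPmIdem : IsIdempotentElem Pm)
    (hSum : Pp + Pm = 1)
    (hpm : IsHilbertSchmidt (Pp ∘L U ∘L Pm)) (hmp : IsHilbertSchmidt (Pm ∘L U ∘L Pp))
    (R : H →L[ℂ] H) (hRcorner : Pm ∘L R ∘L Pm = R)
    (hR1 : R ∘L (Pm ∘L U ∘L Pm) = Pm) (hR2 : (Pm ∘L U ∘L Pm) ∘L R = Pm) :
    IsTraceClass (adjoint R ∘L R - Pm) := by
  obtain ⟨w, b, hB⟩ := hpm
  set S := (Pp ∘L U ∘L Pm) ∘L R with hSdef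
  have hSsum : Summable fun i => ‖S (b i)‖ ^ 2 := summable_comp_sq' b _ R hB
  have hkey : adjoint S ∘L S = adjoint R ∘L R - Pm := by
    rw [hSdef]
    simp only [← ContinuousLinearMap.star_eq_adjoint, ← ContinuousLinearMap.mul_def]
      at hU1 hR1 hR2 hRcorner ⊢
    have hPmR : Pm * R = R := by
      conv_lhs => rw [← hRcorner]
      rw [← mul_assoc, hPmIdem.eq, hRcorner]
    have hPpEq : Pp = 1 - Pm := eq_sub_of_add_eq hSum
    have hA : Pm * (U * R) = Pm := by
      have h := hR2
      simp only [mul_assoc] at h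
      rwa [hPmR] at h
    have hstarA : star R * (Pm * (star U * Pm)) = Pm := by
      have h := congrArg star hR2
      simp only [star_mul, hPmSa.star_eq, mul_assoc] at h
      exact h
    have hUU : ∀ X : H →L[ℂ] H, star U * (U * X) = X := by
      intro X
      rw [← mul_assoc, hU1, one_mul]
    simp only [star_mul, hPmSa.star_eq, hPpSa.star_eq, mul_assoc]
    rw [hPmR, ← mul_assoc Pp Pp, hPpIdem.eq]
    rw [hPpEq]
    rw [sub_mul, one_mul, mul_sub, hUU, mul_sub, hPmR, hA, mul_sub, hstarA]
  refine ⟨w, b, ?_⟩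
  rw [← hkey]
  have hpos : (0 : H →L[ℂ] H) ≤ adjoint S ∘L S := by
    simpa [← ContinuousLinearMap.star_eq_adjoint, ContinuousLinearMap.mul_def]
      using star_mul_self_nonneg S
  have habs : opAbs (adjoint S ∘L S) = adjoint S ∘L S := by
    unfold opAbs
    rw [ContinuousLinearMap.adjoint_comp, ContinuousLinearMap.adjoint_adjoint]
    rw [show (adjoint S ∘L S) ∘L (adjoint S ∘L S) = (adjoint S ∘L S) ^ 2 from (sq _).symm]
    exact CFC.sqrt_sq _ hpos
  rw [habs]
  refine hSsum.congr fun i => ?_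
  have hin : (inner ℂ (b i) ((adjoint S ∘L S) (b i)) : ℂ) = inner ℂ (S (b i)) (S (b i)) := by
    rw [ContinuousLinearMap.comp_apply, ContinuousLinearMap.adjoint_inner_right]
  rw [hin]
  exact (inner_self_eq_norm_sq _).symm

end
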